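/- Let λ be a partition of n and define v_λ ∈ S_n by tab^λ = v_λ·tab_λ. Then the number of elements w ∈ S_n with w ≤_L v_λ (in left weak Bruhat order) equals the number of standard Young tableaux of shape λ. -/

import Mathlib

def IsColSuperstandard (μ : YoungDiagram) (n : ℕ)
    (t : {c // c ∈ μ.cells} ≃ Fin n) : Prop :=
  ∀ c : {c // c ∈ μ.cells},
    ((t c : Fin n) : ℕ) = (∑ h ∈ Finset.range c.1.2, μ.colLen h) + c.1.1

def IsRowSuperstandard (μ : YoungDiagram) (n : ℕ)
    (t : {c // c ∈ μ.cells} ≃ Fin n) : Prop :=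
  ∀ c : {c // c ∈ μ.cells},
    ((t c : Fin n) : ℕ) = (∑ h ∈ Finset.range c.1.1, μ.rowLen h) + c.1.2

def invLen {n : ℕ} (w : Equiv.Perm (Fin n)) : ℕ :=
  (Finset.univ.filter fun p : Fin n × Fin n => p.1 < p.2 ∧ w p.2 < w p.1).card

def LeftWeakLE {n : ℕ} (u w : Equiv.Perm (Fin n)) : Prop :=
  invLen (w * u⁻¹) + invLen u = invLen w

def IsStandard (μ : YoungDiagram) (n : ℕ)
    (t : {c // c ∈ μ.cells} ≃ Fin n) : Prop :=
  (∀ c c' : {c // c ∈ μ.cells}, (c.1).1 = (c'.1).1 → (c.1).2 < (c'.1).2 → t c < t c') ∧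
  (∀ c c' : {c // c ∈ μ.cells}, (c.1).2 = (c'.1).2 → (c.1).1 < (c'.1).1 → t c < t c')

open Finset

section WeakOrder

variable {n : ℕ}

/-- The set of inversions of a permutation. -/
def InvSet (w : Equiv.Perm (Fin n)) : Finset (Fin n × Fin n) :=
  Finset.univ.filter fun p => p.1 < p.2 ∧ w p.2 < w p.1

lemma invLen_eq (w : Equiv.Perm (Fin n)) : invLen w = (InvSet w).card := rfl

/-- The pull-back of the inversion set of `w * u⁻¹` along `u`. -/
def Bset (u w : Equiv.Perm (Fin n)) : Finset (Fin n × Fin n) :=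
  Finset.univ.filter fun p => p.1 < p.2 ∧
    ((u p.1 < u p.2 ∧ w p.2 < w p.1) ∨ (u p.2 < u p.1 ∧ w p.1 < w p.2))

lemma card_Bset (u w : Equiv.Perm (Fin n)) :
    (Bset u w).card = invLen (w * u⁻¹) := by
  rw [invLen_eq]
  apply Finset.card_bij'
    (i := fun p _ => if u p.1 < u p.2 then (u p.1, u p.2) else (u p.2, u p.1))
    (j := fun q _ => if u⁻¹ q.1 < u⁻¹ q.2 then (u⁻¹ q.1, u⁻¹ q.2) else (u⁻¹ q.2, u⁻¹ q.1))
  · intro p hp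
    simp only [Bset, mem_filter, mem_univ, true_and] at hp
    obtain ⟨h12, hor⟩ := hp
    simp only [InvSet, mem_filter, mem_univ, true_and]
    rcases hor with ⟨h1, h2⟩ | ⟨h1, h2⟩
    · rw [if_pos h1]
      refine ⟨h1, ?_⟩
      simpa using h2
    · rw [if_neg (by exact fun h => absurd (h.trans h1) (lt_irrefl _))]
      refine ⟨h1, ?_⟩
      simpa using h2
  · intro q hq
    simp only [InvSet, mem_filter, mem_univ, true_and] at hq
    obtain ⟨h12, hw⟩ := hq
    simp only [Equiv.Perm.mul_apply] at hw
    simp only [Bset, mem_filter, mem_univ, true_and]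
    by_cases hab : u⁻¹ q.1 < u⁻¹ q.2
    · rw [if_pos hab]
      exact ⟨hab, Or.inl ⟨by simpa using h12, by simpa using hw⟩⟩
    · rw [if_neg hab]
      have hne : u⁻¹ q.1 ≠ u⁻¹ q.2 := fun h => by
        apply absurd h12; simp [u⁻¹.injective h]
      have hba : u⁻¹ q.2 < u⁻¹ q.1 := lt_of_le_of_ne (not_lt.mp hab) hne.symm
      exact ⟨hba, Or.inr ⟨by simpa using h12, by simpa using hw⟩⟩
  · intro p hp
    simp only [Bset, mem_filter, mem_univ, true_and] at hp
    obtain ⟨h12, hor⟩ := hp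
    by_cases h1 : u p.1 < u p.2
    · simp [if_pos h1, h12]
    · have hne : u p.1 ≠ u p.2 := fun h => absurd h12 (by simp [u.injective h])
      have h2 : u p.2 < u p.1 := lt_of_le_of_ne (not_lt.mp h1) hne.symm
      rw [if_neg h1]
      simp only [Equiv.Perm.coe_inv, Equiv.symm_apply_apply]
      rw [if_neg (not_lt.mpr h12.le)]
  · intro q hq
    simp only [InvSet, mem_filter, mem_univ, true_and] at hq
    by_cases hab : u⁻¹ q.1 < u⁻¹ q.2
    · rw [if_pos hab]
      simp only [Equiv.Perm.coe_inv, Equiv.apply_symm_apply]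
      rw [if_pos hq.1]
    · have hne : u⁻¹ q.1 ≠ u⁻¹ q.2 := fun h => by
        apply absurd hq.1; simp [u⁻¹.injective h]
      have hba : u⁻¹ q.2 < u⁻¹ q.1 := lt_of_le_of_ne (not_lt.mp hab) hne.symm
      rw [if_neg hab]
      simp only [Equiv.apply_symm_apply, Equiv.Perm.coe_inv]
      rw [if_neg (not_lt.mpr hq.1.le)]

lemma invSet_eq_symmDiff (u w : Equiv.Perm (Fin n)) :
    InvSet w = symmDiff (InvSet u) (Bset u w) := by
  ext p
  simp only [InvSet, Bset, Finset.mem_symmDiff, mem_filter, mem_univ, true_and]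
  constructor
  · rintro ⟨h12, hw⟩
    by_cases hu : u p.2 < u p.1
    · left
      refine ⟨⟨h12, hu⟩, ?_⟩
      rintro ⟨-, (⟨h1, -⟩ | ⟨-, h2⟩)⟩
      · exact absurd (h1.trans hu) (lt_irrefl _)
      · exact absurd (h2.trans hw) (lt_irrefl _)
    · right
      have hne : u p.1 ≠ u p.2 := fun h => absurd h12 (by simp [u.injective h])
      have h1 : u p.1 < u p.2 := lt_of_le_of_ne (not_lt.mp hu) hne
      exact ⟨⟨h12, Or.inl ⟨h1, hw⟩⟩, fun h => hu h.2⟩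
  · rintro (⟨⟨h12, hu⟩, hnb⟩ | ⟨⟨h12, hor⟩, hna⟩)
    · refine ⟨h12, ?_⟩
      by_contra hw
      have hne : w p.1 ≠ w p.2 := fun h => absurd h12 (by simp [w.injective h])
      have : w p.1 < w p.2 := lt_of_le_of_ne (not_lt.mp hw) hne
      exact hnb ⟨h12, Or.inr ⟨hu, this⟩⟩
    · refine ⟨h12, ?_⟩
      rcases hor with ⟨-, h2⟩ | ⟨h1, -⟩
      · exact h2
      · exact absurd ⟨h12, h1⟩ hna

/-- `u` is below `w` in the left weak order iff every inversion of `u` is an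
inversion of `w`. -/
lemma leftWeakLE_iff (u w : Equiv.Perm (Fin n)) :
    LeftWeakLE u w ↔ ∀ i j : Fin n, i < j → u j < u i → w j < w i := by
  have hsub : (∀ i j : Fin n, i < j → u j < u i → w j < w i) ↔ InvSet u ⊆ InvSet w := by
    constructor
    · intro h p hp
      simp only [InvSet, mem_filter, mem_univ, true_and] at hp ⊢
      exact ⟨hp.1, h _ _ hp.1 hp.2⟩
    · intro h i j hij huij
      have := h (show (i, j) ∈ InvSet u by
        simp only [InvSet, mem_filter, mem_univ, true_and]; exact ⟨hij, huij⟩)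
      simp only [InvSet, mem_filter, mem_univ, true_and] at this
      exact this.2
  rw [hsub]
  have hcd : InvSet u ⊆ InvSet w ↔ Disjoint (InvSet u) (Bset u w) := by
    rw [invSet_eq_symmDiff u w, Finset.disjoint_left]
    constructor
    · intro h p hpa hpb
      have := h hpa
      rw [Finset.mem_symmDiff] at this
      tauto
    · intro h p hpa
      rw [Finset.mem_symmDiff]
      exact Or.inl ⟨hpa, h hpa⟩
  rw [hcd]
  unfold LeftWeakLE
  rw [← card_Bset u w, invLen_eq u, invLen_eq w, invSet_eq_symmDiff u w]
  set A := InvSet u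
  set B := Bset u w
  have hi1 : (A ∩ B).card + (A \ B).card = A.card := Finset.card_inter_add_card_sdiff _ _
  have hi2 : (A ∩ B).card + (B \ A).card = B.card := by
    rw [Finset.inter_comm]; exact Finset.card_inter_add_card_sdiff _ _
  have hΔ : (symmDiff A B).card = (A \ B).card + (B \ A).card := by
    rw [symmDiff_def, Finset.sup_eq_union]
    exact Finset.card_union_of_disjoint disjoint_sdiff_sdiff
  rw [Finset.disjoint_iff_inter_eq_empty, ← Finset.card_eq_zero]
  constructor
  · intro h; omega
  · intro h; omega

end WeakOrder

section Young

variable {μ : YoungDiagram} {n : ℕ} {tcol trow : {c // c ∈ μ.cells} ≃ Fin n}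

lemma cell_mem (c : {c // c ∈ μ.cells}) : (c.1.1, c.1.2) ∈ μ := by
  have := c.2
  rw [YoungDiagram.mem_cells] at this
  simpa using this

lemma tcol_strict (htcol : IsColSuperstandard μ n tcol) (c c' : {c // c ∈ μ.cells})
    (h : c.1.2 < c'.1.2 ∨ (c.1.2 = c'.1.2 ∧ c.1.1 < c'.1.1)) : tcol c < tcol c' := by
  rw [Fin.lt_def, htcol c, htcol c']
  rcases h with h | ⟨h1, h2⟩
  · have hrow : c.1.1 < μ.colLen c.1.2 := YoungDiagram.mem_iff_lt_colLen.mp (cell_mem c)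
    have hkey : (∑ h ∈ Finset.range c.1.2, μ.colLen h) + μ.colLen c.1.2
        ≤ ∑ h ∈ Finset.range c'.1.2, μ.colLen h := by
      rw [← Finset.sum_range_succ]
      exact Finset.sum_le_sum_of_subset (Finset.range_subset_range.mpr h)
    omega
  · rw [h1]; omega

lemma trow_strict (htrow : IsRowSuperstandard μ n trow) (c c' : {c // c ∈ μ.cells})
    (h : c.1.1 < c'.1.1 ∨ (c.1.1 = c'.1.1 ∧ c.1.2 < c'.1.2)) : trow c < trow c' := by
  rw [Fin.lt_def, htrow c, htrow c']
  rcases h with h | ⟨h1, h2⟩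
  · have hcol : c.1.2 < μ.rowLen c.1.1 := YoungDiagram.mem_iff_lt_rowLen.mp (cell_mem c)
    have hkey : (∑ h ∈ Finset.range c.1.1, μ.rowLen h) + μ.rowLen c.1.1
        ≤ ∑ h ∈ Finset.range c'.1.1, μ.rowLen h := by
      rw [← Finset.sum_range_succ]
      exact Finset.sum_le_sum_of_subset (Finset.range_subset_range.mpr h)
    omega
  · rw [h1]; omega

lemma cell_ext (c c' : {c // c ∈ μ.cells}) (h1 : c.1.1 = c'.1.1) (h2 : c.1.2 = c'.1.2) :
    c = c' := by
  apply Subtype.ext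
  exact Prod.ext h1 h2

lemma tcol_lt_iff (htcol : IsColSuperstandard μ n tcol) (c c' : {c // c ∈ μ.cells}) :
    tcol c < tcol c' ↔ (c.1.2 < c'.1.2 ∨ (c.1.2 = c'.1.2 ∧ c.1.1 < c'.1.1)) := by
  rcases Nat.lt_trichotomy c.1.2 c'.1.2 with h2 | h2 | h2
  · exact iff_of_true (tcol_strict htcol c c' (Or.inl h2)) (Or.inl h2)
  · rcases Nat.lt_trichotomy c.1.1 c'.1.1 with h1 | h1 | h1
    · exact iff_of_true (tcol_strict htcol c c' (Or.inr ⟨h2, h1⟩)) (Or.inr ⟨h2, h1⟩)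
    · rw [cell_ext c c' h1 h2]
      exact iff_of_false (lt_irrefl _) (by omega)
    · exact iff_of_false (asymm (tcol_strict htcol c' c (Or.inr ⟨h2.symm, h1⟩))) (by omega)
  · exact iff_of_false (asymm (tcol_strict htcol c' c (Or.inl h2))) (by omega)

lemma trow_lt_iff (htrow : IsRowSuperstandard μ n trow) (c c' : {c // c ∈ μ.cells}) :
    trow c < trow c' ↔ (c.1.1 < c'.1.1 ∨ (c.1.1 = c'.1.1 ∧ c.1.2 < c'.1.2)) := by
  rcases Nat.lt_trichotomy c.1.1 c'.1.1 with h2 | h2 | h2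
  · exact iff_of_true (trow_strict htrow c c' (Or.inl h2)) (Or.inl h2)
  · rcases Nat.lt_trichotomy c.1.2 c'.1.2 with h1 | h1 | h1
    · exact iff_of_true (trow_strict htrow c c' (Or.inr ⟨h2, h1⟩)) (Or.inr ⟨h2, h1⟩)
    · rw [cell_ext c c' h2 h1]
      exact iff_of_false (lt_irrefl _) (by omega)
    · exact iff_of_false (asymm (trow_strict htrow c' c (Or.inr ⟨h2.symm, h1⟩))) (by omega)
  · exact iff_of_false (asymm (trow_strict htrow c' c (Or.inl h2))) (by omega)

lemma key_lemma (htcol : IsColSuperstandard μ n tcol) (htrow : IsRowSuperstandard μ n trow)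
    (vlam : Equiv.Perm (Fin n)) (hv : trow = tcol.trans vlam) (w : Equiv.Perm (Fin n)) :
    (∀ i j : Fin n, i < j → w j < w i → vlam j < vlam i) ↔ IsStandard μ n (tcol.trans w) := by
  have hvap : ∀ c : {c // c ∈ μ.cells}, vlam (tcol c) = trow c := by
    intro c; rw [hv]; rfl
  have tw : ∀ c : {c // c ∈ μ.cells}, (tcol.trans w) c = w (tcol c) := fun _ => rfl
  constructor
  · intro h
    constructor
    · intro c c' h1 h2
      have hcc : tcol c < tcol c' := (tcol_lt_iff htcol c c').mpr (Or.inl h2)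
      by_contra hle
      have hne : w (tcol c) ≠ w (tcol c') := fun he =>
        absurd (tcol.injective (w.injective he)) (by
          intro hcceq; rw [hcceq] at hcc; exact lt_irrefl _ hcc)
      have hlt : w (tcol c') < w (tcol c) := by
        rcases lt_or_gt_of_ne hne with h' | h'
        · exact absurd h' (by rw [tw, tw] at hle; exact hle)
        · exact h'
      have := h _ _ hcc hlt
      rw [hvap, hvap, trow_lt_iff htrow] at this
      omega
    · intro c c' h1 h2
      have hcc : tcol c < tcol c' := (tcol_lt_iff htcol c c').mpr (Or.inr ⟨h1, h2⟩)
      by_contra hle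
      have hne : w (tcol c) ≠ w (tcol c') := fun he =>
        absurd (tcol.injective (w.injective he)) (by
          intro hcceq; rw [hcceq] at hcc; exact lt_irrefl _ hcc)
      have hlt : w (tcol c') < w (tcol c) := by
        rcases lt_or_gt_of_ne hne with h' | h'
        · exact absurd h' (by rw [tw, tw] at hle; exact hle)
        · exact h'
      have := h _ _ hcc hlt
      rw [hvap, hvap, trow_lt_iff htrow] at this
      omega
  · intro hst i j hij hwij
    set c := tcol.symm i with hc
    set c' := tcol.symm j with hc'
    have hi : tcol c = i := tcol.apply_symm_apply i
    have hj : tcol c' = j := tcol.apply_symm_apply j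
    have hcc : tcol c < tcol c' := by rw [hi, hj]; exact hij
    have htcc' : (tcol.trans w) c' < (tcol.trans w) c := by
      rw [tw, tw, hi, hj]; exact hwij
    rw [tcol_lt_iff htcol] at hcc
    have goal_eq : (vlam j < vlam i) = (trow c' < trow c) := by
      rw [← hi, ← hj, hvap, hvap]
    rw [goal_eq, trow_lt_iff htrow]
    rcases hcc with hcol | ⟨hcol, hrow⟩
    · left
      by_contra hge
      push_neg at hge
      rcases Nat.lt_or_ge c.1.1 c'.1.1 with hlt | hge2
      · have hmem : (c'.1.1, c.1.2) ∈ μ :=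
          μ.up_left_mem (le_refl _) (le_of_lt hcol) (cell_mem c')
        set e : {c // c ∈ μ.cells} := ⟨(c'.1.1, c.1.2), (YoungDiagram.mem_cells _).mpr hmem⟩
        have h1 : (tcol.trans w) c < (tcol.trans w) e := hst.2 c e rfl hlt
        have h2 : (tcol.trans w) e < (tcol.trans w) c' := hst.1 e c' rfl hcol
        exact absurd ((h1.trans h2).trans htcc') (lt_irrefl _)
      · have heq : c.1.1 = c'.1.1 := le_antisymm hge hge2
        have h1 : (tcol.trans w) c < (tcol.trans w) c' := hst.1 c c' heq hcol
        exact absurd (h1.trans htcc') (lt_irrefl _)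
    · have h1 : (tcol.trans w) c < (tcol.trans w) c' := hst.2 c c' hcol hrow
      exact absurd (h1.trans htcc') (lt_irrefl _)

end Young

/-- The number of elements `w ∈ S_n` with `w ≤_L v_λ` equals the number of
standard Young tableaux of shape `λ`. -/
theorem card_leftWeak_le_vlambda_eq_card_standard (μ : YoungDiagram) (n : ℕ)
    (hcard : μ.card = n) (tcol trow : {c // c ∈ μ.cells} ≃ Fin n)
    (htcol : IsColSuperstandard μ n tcol) (htrow : IsRowSuperstandard μ n trow)
    (vlam : Equiv.Perm (Fin n)) (hv : trow = tcol.trans vlam) :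
    Nat.card {w : Equiv.Perm (Fin n) // LeftWeakLE w vlam} =
      Nat.card {t : {c // c ∈ μ.cells} ≃ Fin n // IsStandard μ n t} := by
  have hiff : ∀ w : Equiv.Perm (Fin n),
      LeftWeakLE w vlam ↔ IsStandard μ n (tcol.trans w) := by
    intro w
    rw [leftWeakLE_iff]
    exact key_lemma htcol htrow vlam hv w
  apply Nat.card_congr
  refine
    { toFun := fun w => ⟨tcol.trans w.1, (hiff w.1).mp w.2⟩
      invFun := fun t => ⟨tcol.symm.trans t.1, ?_⟩
      left_inv := ?_
      right_inv := ?_ }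
  · rw [hiff]
    have : tcol.trans (tcol.symm.trans t.1) = t.1 := by
      ext c; simp
    rw [this]
    exact t.2
  · intro w
    apply Subtype.ext
    ext i
    simp
  · intro t
    apply Subtype.ext
    ext c
    simp
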